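/- Let Σ be a nonempty countable locally finite graph, fix a vertex o and n ≥ 1, and let π be a fibration from a countable locally finite graph Λ onto Σ with x ∈ π⁻¹(o). For p ∈ [0,1], perform independent site percolation with parameter p on Λ and on Σ. Then the probability that there is an open self-avoiding path of length n in Λ starting at x is at least the probability that there is an open self-avoiding path of length n in Σ starting at o. -/
import Mathlib


open MeasureTheory ProbabilityTheory

/-- Bernoulli measure of parameter `p` on `Bool`. -/
noncomputable def bern (p : ENNReal) : Measure Bool :=
  p • Measure.dirac true + (1 - p) • Measure.dirac false

/-- `P` is the law of an i.i.d. family of Bernoulli(p) random variables indexed by `ι`: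
all finite-dimensional marginals are product Bernoulli measures. -/
def iidMarginals {ι : Type*} (p : ENNReal) (P : Measure (ι → Bool)) : Prop :=
  IsProbabilityMeasure P ∧ ∀ s : Finset ι,
    P.map (fun ω (i : s) => ω i) = Measure.pi (fun _ : s => bern p)

/-- The open cluster of `v` in site percolation with configuration `ω`. -/
def siteCluster {V : Type*} (G : SimpleGraph V) (ω : V → Bool) (v : V) : Set V :=
  {w | ∃ wk : G.Walk v w, ∀ u ∈ wk.support, ω u = true}

/-- Some site-percolation cluster is infinite. -/
def sitePercolates {V : Type*} (G : SimpleGraph V) (ω : V → Bool) : Prop :=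
  ∃ v, (siteCluster G ω v).Infinite

/-- The critical parameter of site percolation. -/
noncomputable def pcSite {V : Type*} (G : SimpleGraph V) : ENNReal :=
  sSup {p | p ≤ 1 ∧ ∀ P : Measure (V → Bool), iidMarginals p P →
    P {ω | sitePercolates G ω} = 0}

/-- The open cluster of `v` in bond percolation with configuration `ω`. -/
def bondCluster {V : Type*} (G : SimpleGraph V) (ω : Sym2 V → Bool) (v : V) : Set V :=
  {w | ∃ wk : G.Walk v w, ∀ e ∈ wk.edges, ω e = true}

/-- Some bond-percolation cluster is infinite. -/
def bondPercolates {V : Type*} (G : SimpleGraph V) (ω : Sym2 V → Bool) : Prop :=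
  ∃ v, (bondCluster G ω v).Infinite

/-- The critical parameter of bond percolation. -/
noncomputable def pcBond {V : Type*} (G : SimpleGraph V) : ENNReal :=
  sSup {p | p ≤ 1 ∧ ∀ P : Measure (Sym2 V → Bool), iidMarginals p P →
    P {ω | bondPercolates G ω} = 0}

/-- A fibration from `Λ` to `S`. -/
def IsFibration {VL VS : Type*} (Λ : SimpleGraph VL) (S : SimpleGraph VS)
    (π : VL → VS) : Prop :=
  Function.Surjective π ∧
    ∀ x : VL, ∀ v : VS, S.Adj (π x) v → ∃ y : VL, Λ.Adj x y ∧ π y = v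

/-- There is an open self-avoiding path of length `n` starting at `v`. -/
def OpenSAP {V : Type*} (G : SimpleGraph V) (ω : V → Bool) (v : V) (n : ℕ) : Prop :=
  ∃ w : V, ∃ wk : G.Walk v w, wk.IsPath ∧ wk.length = n ∧ ∀ u ∈ wk.support, ω u = true

noncomputable section BSaux

variable {V : Type*} [DecidableEq V]

/-- Weight of configuration `s` (the open set) inside ambient finite set `A`. -/
def prW (p : ENNReal) (A s : Finset V) : ENNReal :=
  p ^ s.card * (1 - p) ^ (A \ s).card

/-- Probability, under product Bernoulli(p) on `A`, that some member of the family `F`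
is entirely open. -/
def prF (p : ENNReal) (A : Finset V) (F : Finset (Finset V)) : ENNReal :=
  ∑ s ∈ A.powerset, prW p A s * (if ∃ T ∈ F, T ⊆ s then 1 else 0)

lemma prW_insert_left {p : ENNReal} {A s : Finset V} {a : V} (ha : a ∉ A) (hs : s ⊆ A) :
    prW p (insert a A) s = (1 - p) * prW p A s := by
  have has : a ∉ s := fun h => ha (hs h)
  unfold prW
  rw [Finset.insert_sdiff_of_notMem _ has, Finset.card_insert_of_notMem (by
    simp only [Finset.mem_sdiff]; tauto), pow_succ]
  ring

lemma prW_insert_both {p : ENNReal} {A s : Finset V} {a : V} (ha : a ∉ A) (hs : s ⊆ A) :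
    prW p (insert a A) (insert a s) = p * prW p A s := by
  have has : a ∉ s := fun h => ha (hs h)
  have h1 : insert a A \ insert a s = A \ s := by
    ext x
    by_cases hx : x = a <;> simp [hx, ha, has]
  unfold prW
  rw [h1, Finset.card_insert_of_notMem has, pow_succ]
  ring

lemma prF_insert (p : ENNReal) {A : Finset V} {a : V} (ha : a ∉ A)
    (F : Finset (Finset V)) :
    prF p (insert a A) F
      = p * prF p A (F.image (fun U => U.erase a)) + (1 - p) * prF p A (F.filter (fun U => a ∉ U)) := by
  have hdis : Disjoint A.powerset (A.powerset.image (insert a)) := by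
    rw [Finset.disjoint_left]
    rintro s hs hs'
    obtain ⟨t, ht, rfl⟩ := Finset.mem_image.1 hs'
    exact ha (Finset.mem_powerset.1 hs (Finset.mem_insert_self a t))
  have hinj : ∀ s ∈ A.powerset, ∀ t ∈ A.powerset, insert a s = insert a t → s = t := by
    intro s hs t ht h
    have hsa : a ∉ s := fun h' => ha (Finset.mem_powerset.1 hs h')
    have hta : a ∉ t := fun h' => ha (Finset.mem_powerset.1 ht h')
    rw [← Finset.erase_insert hsa, ← Finset.erase_insert hta, h]
  set F1 : Finset (Finset V) := F.filter (fun U => a ∉ U) with hF1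
  set F2 : Finset (Finset V) := F.image (fun U => U.erase a) with hF2
  unfold prF
  rw [Finset.powerset_insert, Finset.sum_union hdis, Finset.sum_image hinj]
  have h1 : ∑ s ∈ A.powerset, prW p (insert a A) s * (if ∃ T ∈ F, T ⊆ s then 1 else 0)
      = (1 - p) * ∑ s ∈ A.powerset, prW p A s *
        (if ∃ T ∈ F1, T ⊆ s then 1 else 0) := by
    rw [Finset.mul_sum]
    refine Finset.sum_congr rfl fun s hs => ?_
    have hsA := Finset.mem_powerset.1 hs
    rw [prW_insert_left ha hsA, mul_assoc]
    congr 1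
    congr 1
    refine if_congr ?_ rfl rfl
    constructor
    · rintro ⟨T, hT, hTs⟩
      exact ⟨T, Finset.mem_filter.2 ⟨hT, fun h => ha (hsA (hTs h))⟩, hTs⟩
    · rintro ⟨T, hT, hTs⟩
      exact ⟨T, (Finset.mem_filter.1 (hF1 ▸ hT)).1, hTs⟩
  have h2 : ∑ s ∈ A.powerset, prW p (insert a A) (insert a s) *
        (if ∃ T ∈ F, T ⊆ insert a s then 1 else 0)
      = p * ∑ s ∈ A.powerset, prW p A s *
        (if ∃ T ∈ F2, T ⊆ s then 1 else 0) := by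
    rw [Finset.mul_sum]
    refine Finset.sum_congr rfl fun s hs => ?_
    have hsA := Finset.mem_powerset.1 hs
    have hsa : a ∉ s := fun h => ha (hsA h)
    rw [prW_insert_both ha hsA, mul_assoc]
    congr 1
    congr 1
    refine if_congr ?_ rfl rfl
    constructor
    · rintro ⟨T, hT, hTs⟩
      refine ⟨T.erase a, hF2 ▸ Finset.mem_image_of_mem _ hT, fun x hx => ?_⟩
      have hx' := Finset.mem_erase.1 hx
      rcases Finset.mem_insert.1 (hTs hx'.2) with h | h
      · exact absurd h hx'.1
      · exact h
    · rintro ⟨T', hT', hTs⟩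
      obtain ⟨T, hT, rfl⟩ := Finset.mem_image.1 (hF2 ▸ hT')
      refine ⟨T, hT, fun x hx => ?_⟩
      by_cases hxa : x = a
      · exact Finset.mem_insert.2 (Or.inl hxa)
      · exact Finset.mem_insert.2 (Or.inr (hTs (Finset.mem_erase.2 ⟨hxa, hx⟩)))
  rw [h1, h2, add_comm]

lemma prF_singleton_empty (p : ENNReal) (hp : p ≤ 1) (A : Finset V) :
    prF p A ({∅} : Finset (Finset V)) = 1 := by
  induction A using Finset.induction_on with
  | empty =>
    simp [prF, prW]
  | @insert a A ha ih =>
    rw [prF_insert p ha]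
    have h1 : (({∅} : Finset (Finset V)).image (fun U => U.erase a)) = {∅} := by simp
    have h2 : (({∅} : Finset (Finset V)).filter (fun U => a ∉ U)) = {∅} := by
      rw [Finset.filter_singleton]; simp
    rw [h1, h2, ih, mul_one, mul_one, add_tsub_cancel_of_le hp]

lemma prF_mono_aux (p : ENNReal) (A : Finset V) {F G : Finset (Finset V)}
    (h : ∀ s ∈ A.powerset, (∃ T ∈ F, T ⊆ s) → (∃ T ∈ G, T ⊆ s)) :
    prF p A F ≤ prF p A G := by
  refine Finset.sum_le_sum fun s hs => ?_
  refine mul_le_mul_right ?_ _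
  by_cases hF : ∃ T ∈ F, T ⊆ s
  · simp [hF, h s hs hF]
  · simp [hF]

lemma prF_le_one (p : ENNReal) (hp : p ≤ 1) (A : Finset V) (F : Finset (Finset V)) :
    prF p A F ≤ 1 := by
  calc prF p A F ≤ prF p A {∅} :=
        prF_mono_aux p A (fun s _ _ => ⟨∅, Finset.mem_singleton_self _, Finset.empty_subset s⟩)
    _ = 1 := prF_singleton_empty p hp A

lemma prF_submod (p : ENNReal) (A : Finset V) {H G R : Finset (Finset V)}
    (hRH : R ⊆ H) (hRG : R ⊆ G) :
    prF p A (H ∪ G) + prF p A R ≤ prF p A H + prF p A G := by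
  unfold prF
  rw [← Finset.sum_add_distrib, ← Finset.sum_add_distrib]
  refine Finset.sum_le_sum fun s _ => ?_
  rw [← mul_add, ← mul_add]
  refine mul_le_mul_right ?_ _
  have h1 : (∃ T ∈ H ∪ G, T ⊆ s) ↔ (∃ T ∈ H, T ⊆ s) ∨ (∃ T ∈ G, T ⊆ s) := by
    constructor
    · rintro ⟨T, hT, hTs⟩
      rcases Finset.mem_union.1 hT with h | h
      · exact Or.inl ⟨T, h, hTs⟩
      · exact Or.inr ⟨T, h, hTs⟩
    · rintro (⟨T, hT, hTs⟩ | ⟨T, hT, hTs⟩)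
      · exact ⟨T, Finset.mem_union_left _ hT, hTs⟩
      · exact ⟨T, Finset.mem_union_right _ hT, hTs⟩
  have h2 : (∃ T ∈ R, T ⊆ s) → (∃ T ∈ H, T ⊆ s) := fun ⟨T, hT, hTs⟩ => ⟨T, hRH hT, hTs⟩
  have h3 : (∃ T ∈ R, T ⊆ s) → (∃ T ∈ G, T ⊆ s) := fun ⟨T, hT, hTs⟩ => ⟨T, hRG hT, hTs⟩
  by_cases hH : ∃ T ∈ H, T ⊆ s <;> by_cases hG : ∃ T ∈ G, T ⊆ s
  · rw [if_pos (h1.2 (Or.inl hH)), if_pos hH, if_pos hG]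
    refine add_le_add le_rfl ?_
    split_ifs <;> norm_num
  · rw [if_pos (h1.2 (Or.inl hH)), if_neg (fun hr => hG (h3 hr)), if_pos hH, if_neg hG]
  · rw [if_pos (h1.2 (Or.inr hG)), if_neg (fun hr => hH (h2 hr)), if_neg hH, if_pos hG]
    simp
  · rw [if_neg (fun hu => (h1.1 hu).elim hH hG), if_neg (fun hr => hH (h2 hr)),
      if_neg hH, if_neg hG]

lemma prF_conv (p : ENNReal) (hp : p ≤ 1) (B' : Finset V) :
    ∀ (F : Finset V), F ∩ B' = ∅ → ∀ (T : Finset (Finset V)),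
      (∀ t ∈ T, t ⊆ F ∪ B') → (∀ t ∈ T, (t ∩ F).card ≤ 1) →
      p * prF p B' (T.image (fun U => U \ F)) +
        (1 - p) * prF p B' (T.filter (fun U => U ∩ F = ∅)) ≤ prF p (F ∪ B') T := by
  intro F
  induction F using Finset.induction_on with
  | empty =>
    intro _ T _ _
    have h1 : T.image (fun U => U \ ∅) = T := by
      simp
    have h2 : T.filter (fun U => U ∩ (∅ : Finset V) = ∅) = T := by
      simp
    rw [h1, h2, ← add_mul, add_tsub_cancel_of_le hp, one_mul, Finset.empty_union]
  | @insert b F₀ hb ih =>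
    intro hFB' T hT1 hT2
    have hbB' : b ∉ B' := by
      intro h
      have : b ∈ insert b F₀ ∩ B' := Finset.mem_inter.2 ⟨Finset.mem_insert_self _ _, h⟩
      rw [hFB'] at this; exact absurd this (Finset.notMem_empty b)
    have hF₀B' : F₀ ∩ B' = ∅ := by
      rw [Finset.eq_empty_iff_forall_notMem]
      intro z hz
      have hz' := Finset.mem_inter.1 hz
      have : z ∈ insert b F₀ ∩ B' :=
        Finset.mem_inter.2 ⟨Finset.mem_insert_of_mem hz'.1, hz'.2⟩
      rw [hFB'] at this; exact absurd this (Finset.notMem_empty z)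
    have hbu : b ∉ F₀ ∪ B' := by
      rw [Finset.mem_union]; rintro (h | h); exacts [hb h, hbB' h]
    have hins : insert b F₀ ∪ B' = insert b (F₀ ∪ B') := by
      ext z; simp [Finset.mem_insert, Finset.mem_union, or_assoc]
    rw [hins, prF_insert p hbu]
    set T₁ : Finset (Finset V) := T.image (fun U => U.erase b) with hT₁def
    set T₂ : Finset (Finset V) := T.filter (fun U => b ∉ U) with hT₂def
    -- apply IH to T₁ and T₂
    have hT₁sub : ∀ t ∈ T₁, t ⊆ F₀ ∪ B' := by
      intro t ht
      obtain ⟨u, hu, rfl⟩ := Finset.mem_image.1 (hT₁def ▸ ht)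
      intro z hz
      have hz' := Finset.mem_erase.1 hz
      have := hT1 u hu hz'.2
      rcases Finset.mem_union.1 this with h | h
      · rcases Finset.mem_insert.1 h with h' | h'
        · exact absurd h' hz'.1
        · exact Finset.mem_union_left _ h'
      · exact Finset.mem_union_right _ h
    have hT₁card : ∀ t ∈ T₁, (t ∩ F₀).card ≤ 1 := by
      intro t ht
      obtain ⟨u, hu, rfl⟩ := Finset.mem_image.1 (hT₁def ▸ ht)
      refine le_trans (Finset.card_le_card ?_) (hT2 u hu)
      intro z hz
      have hz' := Finset.mem_inter.1 hz
      exact Finset.mem_inter.2 ⟨(Finset.mem_erase.1 hz'.1).2,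
        Finset.mem_insert_of_mem hz'.2⟩
    have hT₂sub : ∀ t ∈ T₂, t ⊆ F₀ ∪ B' := by
      intro t ht
      have ht' := Finset.mem_filter.1 (hT₂def ▸ ht)
      intro z hz
      rcases Finset.mem_union.1 (hT1 t ht'.1 hz) with h | h
      · rcases Finset.mem_insert.1 h with h' | h'
        · exact absurd (h' ▸ hz) ht'.2
        · exact Finset.mem_union_left _ h'
      · exact Finset.mem_union_right _ h
    have hT₂card : ∀ t ∈ T₂, (t ∩ F₀).card ≤ 1 := by
      intro t ht
      have ht' := Finset.mem_filter.1 (hT₂def ▸ ht)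
      refine le_trans (Finset.card_le_card ?_) (hT2 t ht'.1)
      intro z hz
      have hz' := Finset.mem_inter.1 hz
      exact Finset.mem_inter.2 ⟨hz'.1, Finset.mem_insert_of_mem hz'.2⟩
    have ih1 := ih hF₀B' T₁ hT₁sub hT₁card
    have ih2 := ih hF₀B' T₂ hT₂sub hT₂card
    -- families
    set Afam : Finset (Finset V) := T.image (fun U => U \ insert b F₀) with hAfam
    set Hfam : Finset (Finset V) :=
      (T.filter (fun U => U ∩ insert b F₀ ⊆ {b})).image (fun U => U \ insert b F₀) with hHfam
    set Gfam : Finset (Finset V) :=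
      (T.filter (fun U => b ∉ U)).image (fun U => U \ insert b F₀) with hGfam
    set Rfam : Finset (Finset V) := T.filter (fun U => U ∩ insert b F₀ = ∅) with hRfam
    -- identifications
    have e1 : T₁.image (fun U => U \ F₀) = Afam := by
      rw [hT₁def, Finset.image_image, hAfam]
      refine Finset.image_congr ?_
      intro u _
      ext z
      simp only [Function.comp_apply, Finset.mem_sdiff, Finset.mem_erase, Finset.mem_insert]
      tauto
    have e2 : T₁.filter (fun U => U ∩ F₀ = ∅) = Hfam := by
      rw [hT₁def, Finset.filter_image, hHfam]
      have hfe : T.filter (fun U => U.erase b ∩ F₀ = ∅)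
          = T.filter (fun U => U ∩ insert b F₀ ⊆ {b}) := by
        refine Finset.filter_congr ?_
        intro u _
        constructor
        · intro h z hz
          have hz' := Finset.mem_inter.1 hz
          rcases Finset.mem_insert.1 hz'.2 with h' | h'
          · exact Finset.mem_singleton.2 h'
          · exfalso
            have hzb : z ≠ b := fun hzb => hb (hzb ▸ h')
            have : z ∈ u.erase b ∩ F₀ :=
              Finset.mem_inter.2 ⟨Finset.mem_erase.2 ⟨hzb, hz'.1⟩, h'⟩
            rw [h] at this; exact absurd this (Finset.notMem_empty z)
        · intro h
          rw [Finset.eq_empty_iff_forall_notMem]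
          intro z hz
          have hz' := Finset.mem_inter.1 hz
          have hz'' := Finset.mem_erase.1 hz'.1
          have : z ∈ u ∩ insert b F₀ :=
            Finset.mem_inter.2 ⟨hz''.2, Finset.mem_insert_of_mem hz'.2⟩
          exact hz''.1 (Finset.mem_singleton.1 (h this))
      rw [hfe]
      refine Finset.image_congr ?_
      intro u hu
      have hu' := (Finset.mem_coe.1 hu)
      have husub := (Finset.mem_filter.1 hu').2
      ext z
      simp only [Finset.mem_erase, Finset.mem_sdiff, Finset.mem_insert]
      constructor
      · rintro ⟨hzb, hzu⟩
        refine ⟨hzu, ?_⟩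
        rintro (h | h)
        · exact hzb h
        · exact hzb (Finset.mem_singleton.1
            (husub (Finset.mem_inter.2 ⟨hzu, Finset.mem_insert_of_mem h⟩)))
      · rintro ⟨hzu, h⟩
        exact ⟨fun hzb => h (Or.inl hzb), hzu⟩
    have e3 : T₂.image (fun U => U \ F₀) = Gfam := by
      rw [hT₂def, hGfam]
      refine Finset.image_congr ?_
      intro u hu
      have hu' := (Finset.mem_filter.1 (Finset.mem_coe.1 hu)).2
      ext z
      simp only [Finset.mem_sdiff, Finset.mem_insert, not_or]
      constructor
      · rintro ⟨hzu, hz⟩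
        exact ⟨hzu, fun hzb => hu' (hzb ▸ hzu), hz⟩
      · rintro ⟨hzu, _, hz⟩
        exact ⟨hzu, hz⟩
    have e4 : T₂.filter (fun U => U ∩ F₀ = ∅) = Rfam := by
      rw [hT₂def, Finset.filter_filter, hRfam]
      refine Finset.filter_congr ?_
      intro u _
      constructor
      · rintro ⟨hbu, h⟩
        rw [Finset.eq_empty_iff_forall_notMem]
        intro z hz
        have hz' := Finset.mem_inter.1 hz
        rcases Finset.mem_insert.1 hz'.2 with h' | h'
        · exact hbu (h' ▸ hz'.1)
        · have : z ∈ u ∩ F₀ := Finset.mem_inter.2 ⟨hz'.1, h'⟩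
          rw [h] at this; exact absurd this (Finset.notMem_empty z)
      · intro h
        constructor
        · intro hbu
          have : b ∈ u ∩ insert b F₀ :=
            Finset.mem_inter.2 ⟨hbu, Finset.mem_insert_self _ _⟩
          rw [h] at this; exact absurd this (Finset.notMem_empty b)
        · rw [Finset.eq_empty_iff_forall_notMem]
          intro z hz
          have hz' := Finset.mem_inter.1 hz
          have : z ∈ u ∩ insert b F₀ :=
            Finset.mem_inter.2 ⟨hz'.1, Finset.mem_insert_of_mem hz'.2⟩
          rw [h] at this; exact absurd this (Finset.notMem_empty z)
    rw [e1, e2] at ih1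
    rw [e3, e4] at ih2
    -- submodularity input
    have hHG : Hfam ∪ Gfam = Afam := by
      rw [hHfam, hGfam, hAfam, ← Finset.image_union, ← Finset.filter_or]
      congr 1
      refine Finset.filter_true_of_mem ?_
      intro u hu
      by_cases hbu : b ∈ u
      · left
        intro z hz
        have hz' := Finset.mem_inter.1 hz
        have h1 : b ∈ u ∩ insert b F₀ :=
          Finset.mem_inter.2 ⟨hbu, Finset.mem_insert_self _ _⟩
        have := Finset.card_le_one.1 (hT2 u hu) z hz b h1
        exact Finset.mem_singleton.2 this
      · right; exact hbu
    have hRH : Rfam ⊆ Hfam := by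
      intro u hu
      have hu' := Finset.mem_filter.1 (hRfam ▸ hu)
      have hdisj : u \ insert b F₀ = u := by
        rw [Finset.sdiff_eq_self_iff_disjoint, Finset.disjoint_iff_inter_eq_empty]
        exact hu'.2
      rw [hHfam]
      refine Finset.mem_image.2 ⟨u, Finset.mem_filter.2 ⟨hu'.1, ?_⟩, hdisj⟩
      rw [hu'.2]
      exact Finset.empty_subset _
    have hRG : Rfam ⊆ Gfam := by
      intro u hu
      have hu' := Finset.mem_filter.1 (hRfam ▸ hu)
      have hdisj : u \ insert b F₀ = u := by
        rw [Finset.sdiff_eq_self_iff_disjoint, Finset.disjoint_iff_inter_eq_empty]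
        exact hu'.2
      have hbu : b ∉ u := by
        intro hbu
        have : b ∈ u ∩ insert b F₀ :=
          Finset.mem_inter.2 ⟨hbu, Finset.mem_insert_self _ _⟩
        rw [hu'.2] at this; exact absurd this (Finset.notMem_empty b)
      rw [hGfam]
      exact Finset.mem_image.2 ⟨u, Finset.mem_filter.2 ⟨hu'.1, hbu⟩, hdisj⟩
    have key : prF p B' Afam + prF p B' Rfam ≤ prF p B' Hfam + prF p B' Gfam := by
      calc prF p B' Afam + prF p B' Rfam
          = prF p B' (Hfam ∪ Gfam) + prF p B' Rfam := by rw [hHG]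
        _ ≤ prF p B' Hfam + prF p B' Gfam := prF_submod p B' hRH hRG
    -- final algebra
    set q : ENNReal := 1 - p with hq
    have hpq : p + q = 1 := add_tsub_cancel_of_le hp
    set A' := prF p B' Afam
    set H' := prF p B' Hfam
    set G' := prF p B' Gfam
    set R' := prF p B' Rfam
    set X := prF p (F₀ ∪ B') T₁
    set Y := prF p (F₀ ∪ B') T₂
    have eA : p = p * p + q * p := by rw [← add_mul, hpq, one_mul]
    have eR : q = q * q + p * q := by rw [← add_mul, add_comm q p, hpq, one_mul]
    calc p * A' + q * R'
        = (p * p + q * p) * A' + (q * q + p * q) * R' := by rw [← eA, ← eR]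
      _ = p * p * A' + q * q * R' + p * q * (A' + R') := by ring
      _ ≤ p * p * A' + q * q * R' + p * q * (H' + G') := by
          exact add_le_add le_rfl (mul_le_mul_right key _)
      _ = p * (p * A' + q * H') + q * (p * G' + q * R') := by ring
      _ ≤ p * X + q * Y :=
          add_le_add (mul_le_mul_right ih1 _) (mul_le_mul_right ih2 _)

lemma prF_main {VL VS : Type*} [DecidableEq VS] [DecidableEq VL] (π : VL → VS)
    (p : ENNReal) (hp : p ≤ 1) :
    ∀ (A : Finset VS) (B : Finset VL) (P : Finset (Finset VS × Finset VL)),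
      (∀ q ∈ P, q.1 ⊆ A ∧ q.2 ⊆ B ∧ q.2.image π = q.1 ∧ Set.InjOn π ↑q.2) →
      prF p A (P.image Prod.fst) ≤ prF p B (P.image Prod.snd) := by
  intro A
  induction A using Finset.induction_on with
  | empty =>
    intro B P hP
    rcases Finset.eq_empty_or_nonempty P with rfl | ⟨q, hq⟩
    · simp [prF]
    · have h1 : q.1 = ∅ := Finset.subset_empty.1 (hP q hq).1
      have h2 : q.2 = ∅ := by
        have := (hP q hq).2.2.1
        rw [h1] at this
        exact Finset.image_eq_empty.1 this
      have hmem : (∅ : Finset VL) ∈ P.image Prod.snd := by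
        refine Finset.mem_image.2 ⟨q, hq, h2⟩
      have hRHS : prF p B (P.image Prod.snd) = 1 := by
        refine le_antisymm (prF_le_one p hp _ _) ?_
        have : prF p B ({∅} : Finset (Finset VL)) ≤ prF p B (P.image Prod.snd) := by
          refine prF_mono_aux p B ?_
          intro s _ _
          exact ⟨∅, hmem, Finset.empty_subset s⟩
        rw [prF_singleton_empty p hp B] at this
        exact this
      rw [hRHS]
      exact prF_le_one p hp _ _
  | @insert a A₀ ha ih =>
    intro B P hP
    set F : Finset VL := B.filter (fun b => π b = a) with hF
    set B' : Finset VL := B \ F with hB'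
    have hFB : F ⊆ B := Finset.filter_subset _ _
    have hFB' : F ∩ B' = ∅ := by
      rw [hB']
      rw [Finset.eq_empty_iff_forall_notMem]
      intro z hz
      have hz' := Finset.mem_inter.1 hz
      exact (Finset.mem_sdiff.1 hz'.2).2 hz'.1
    have hBsplit : F ∪ B' = B := Finset.union_sdiff_of_subset hFB
    -- the two reduced pair families
    set P₁ : Finset (Finset VS × Finset VL) :=
      P.image (fun q => (q.1.erase a, q.2.filter (fun b => π b ≠ a))) with hP₁
    set P₂ : Finset (Finset VS × Finset VL) := P.filter (fun q => a ∉ q.1) with hP₂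
    have hcond₁ : ∀ q ∈ P₁, q.1 ⊆ A₀ ∧ q.2 ⊆ B' ∧ q.2.image π = q.1 ∧ Set.InjOn π ↑q.2 := by
      intro q' hq'
      obtain ⟨q, hq, rfl⟩ := Finset.mem_image.1 (hP₁ ▸ hq')
      obtain ⟨hqA, hqB, hqim, hqinj⟩ := hP q hq
      refine ⟨?_, ?_, ?_, ?_⟩
      · intro z hz
        have hz' := Finset.mem_erase.1 hz
        rcases Finset.mem_insert.1 (hqA hz'.2) with h | h
        · exact absurd h hz'.1
        · exact h
      · intro z hz
        have hz' := Finset.mem_filter.1 hz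
        rw [hB']
        refine Finset.mem_sdiff.2 ⟨hqB hz'.1, ?_⟩
        rw [hF]
        intro hzF
        exact hz'.2 (Finset.mem_filter.1 hzF).2
      · show (q.2.filter (fun b => π b ≠ a)).image π = q.1.erase a
        have : (q.2.image π).filter (fun v => v ≠ a)
            = (q.2.filter (fun b => π b ≠ a)).image π := Finset.filter_image
        rw [← this, hqim, Finset.filter_ne']
      · exact hqinj.mono (by intro z hz; exact (Finset.mem_filter.1 hz).1)
    have hcond₂ : ∀ q ∈ P₂, q.1 ⊆ A₀ ∧ q.2 ⊆ B' ∧ q.2.image π = q.1 ∧ Set.InjOn π ↑q.2 := by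
      intro q hq
      have hq' := Finset.mem_filter.1 (hP₂ ▸ hq)
      obtain ⟨hqA, hqB, hqim, hqinj⟩ := hP q hq'.1
      refine ⟨?_, ?_, hqim, hqinj⟩
      · intro z hz
        rcases Finset.mem_insert.1 (hqA hz) with h | h
        · exact absurd (h ▸ hz) hq'.2
        · exact h
      · intro z hz
        rw [hB']
        refine Finset.mem_sdiff.2 ⟨hqB hz, ?_⟩
        rw [hF]
        intro hzF
        refine hq'.2 ?_
        rw [← hqim]
        exact (Finset.mem_filter.1 hzF).2 ▸ Finset.mem_image_of_mem π hz
    have ih1 := ih B' P₁ hcond₁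
    have ih2 := ih B' P₂ hcond₂
    -- family identifications
    set S : Finset (Finset VS) := P.image Prod.fst with hS
    set T : Finset (Finset VL) := P.image Prod.snd with hT
    have i1 : P₁.image Prod.fst = S.image (fun U => U.erase a) := by
      rw [hP₁, hS, Finset.image_image, Finset.image_image]
      rfl
    have i2 : P₂.image Prod.fst = S.filter (fun U => a ∉ U) := by
      rw [hP₂, hS, Finset.filter_image]
    have i3 : P₁.image Prod.snd = T.image (fun U => U \ F) := by
      rw [hP₁, hT, Finset.image_image, Finset.image_image]
      refine Finset.image_congr ?_
      intro q hq
      have hqB := (hP q (Finset.mem_coe.1 hq)).2.1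
      show q.2.filter (fun b => π b ≠ a) = q.2 \ F
      ext z
      simp only [Finset.mem_filter, Finset.mem_sdiff]
      constructor
      · rintro ⟨hz, hz'⟩
        exact ⟨hz, fun h => hz' (Finset.mem_filter.1 h).2⟩
      · rintro ⟨hz, hz'⟩
        exact ⟨hz, fun h => hz' (Finset.mem_filter.2 ⟨hqB hz, h⟩)⟩
    have i4 : P₂.image Prod.snd = T.filter (fun U => U ∩ F = ∅) := by
      have hPeq : P.filter (fun q => a ∉ q.1) = P.filter (fun q => q.2 ∩ F = ∅) := by
        refine Finset.filter_congr ?_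
        intro q hq
        obtain ⟨hqA, hqB, hqim, hqinj⟩ := hP q hq
        constructor
        · intro h
          rw [Finset.eq_empty_iff_forall_notMem]
          intro z hz
          have hz' := Finset.mem_inter.1 hz
          have : π z = a := (Finset.mem_filter.1 hz'.2).2
          exact h (this ▸ hqim ▸ Finset.mem_image_of_mem π hz'.1)
        · intro h haq
          rw [← hqim] at haq
          obtain ⟨z, hz, hza⟩ := Finset.mem_image.1 haq
          have : z ∈ q.2 ∩ F :=
            Finset.mem_inter.2 ⟨hz, Finset.mem_filter.2 ⟨hqB hz, hza⟩⟩
          rw [h] at this; exact absurd this (Finset.notMem_empty z)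
      rw [hP₂, hPeq, hT, Finset.filter_image]
    -- conv on the B side
    have hTsub : ∀ t ∈ T, t ⊆ F ∪ B' := by
      intro t ht
      obtain ⟨q, hq, rfl⟩ := Finset.mem_image.1 (hT ▸ ht)
      rw [hBsplit]
      exact (hP q hq).2.1
    have hTcard : ∀ t ∈ T, (t ∩ F).card ≤ 1 := by
      intro t ht
      obtain ⟨q, hq, rfl⟩ := Finset.mem_image.1 (hT ▸ ht)
      have hinj := (hP q hq).2.2.2
      refine Finset.card_le_one.2 ?_
      intro y hy y' hy'
      have hy1 := Finset.mem_inter.1 hy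
      have hy2 := Finset.mem_inter.1 hy'
      have e1 : π y = a := (Finset.mem_filter.1 hy1.2).2
      have e2 : π y' = a := (Finset.mem_filter.1 hy2.2).2
      exact hinj (Finset.mem_coe.2 hy1.1) (Finset.mem_coe.2 hy2.1) (by rw [e1, e2])
    have hconv := prF_conv p hp B' F hFB' T hTsub hTcard
    rw [hBsplit] at hconv
    calc prF p (insert a A₀) S
        = p * prF p A₀ (S.image (fun U => U.erase a))
            + (1 - p) * prF p A₀ (S.filter (fun U => a ∉ U)) := prF_insert p ha S
      _ ≤ p * prF p B' (T.image (fun U => U \ F))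
            + (1 - p) * prF p B' (T.filter (fun U => U ∩ F = ∅)) := by
          refine add_le_add (mul_le_mul_right ?_ _) (mul_le_mul_right ?_ _)
          · rw [← i1, ← i3]; exact ih1
          · rw [← i2, ← i4]; exact ih2
      _ ≤ prF p B T := hconv

open MeasureTheory

lemma bern_true (p : ENNReal) : bern p {true} = p := by
  simp [bern, Measure.dirac_apply' _ (by trivial : MeasurableSet ({true} : Set Bool))]

lemma bern_false (p : ENNReal) : bern p {false} = 1 - p := by
  simp [bern, Measure.dirac_apply' _ (by trivial : MeasurableSet ({false} : Set Bool))]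

lemma bern_fin (p : ENNReal) (hp : p ≤ 1) : IsFiniteMeasure (bern p) := by
  constructor
  rw [bern]
  simp only [Measure.add_apply, Measure.smul_apply, smul_eq_mul]
  have h1 : Measure.dirac true (Set.univ : Set Bool) = 1 := by simp
  have h2 : Measure.dirac false (Set.univ : Set Bool) = 1 := by simp
  rw [h1, h2, mul_one, mul_one]
  exact lt_of_le_of_lt (add_le_add hp tsub_le_self) (by norm_num)

lemma prob_eq {V : Type*} [DecidableEq V] (p : ENNReal) (hp : p ≤ 1)
    (P : Measure (V → Bool)) (hP : iidMarginals p P) (A : Finset V)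
    (F : Finset (Finset V)) (hFA : ∀ T ∈ F, T ⊆ A) :
    P {ω | ∃ T ∈ F, ∀ a ∈ T, ω a = true} = prF p A F := by
  classical
  haveI := bern_fin p hp
  set r : (V → Bool) → (↑A → Bool) := fun ω a => ω ↑a with hr
  have hrm : Measurable r := measurable_pi_lambda r fun a => measurable_pi_apply _
  set E' : Set (↑A → Bool) := {g | ∃ T ∈ F, ∀ a : ↑A, ↑a ∈ T → g a = true} with hE'
  have hE'm : MeasurableSet E' := (Set.to_countable E').measurableSet
  have hpre : r ⁻¹' E' = {ω | ∃ T ∈ F, ∀ a ∈ T, ω a = true} := by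
    ext ω
    simp only [Set.mem_preimage, hE', Set.mem_setOf_eq, hr]
    constructor
    · rintro ⟨T, hT, h⟩
      exact ⟨T, hT, fun a haT => h ⟨a, hFA T hT haT⟩ haT⟩
    · rintro ⟨T, hT, h⟩
      exact ⟨T, hT, fun a haT => h ↑a haT⟩
  have step1 : P {ω | ∃ T ∈ F, ∀ a ∈ T, ω a = true}
      = (Measure.pi fun _ : ↑A => bern p) E' := by
    rw [← hpre, ← Measure.map_apply hrm hE'm, hP.2 A]
  rw [step1]
  -- decompose E' into singletons
  have hsing : ∀ g : ↑A → Bool,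
      (Measure.pi fun _ : ↑A => bern p) {g} = ∏ a : ↑A, bern p {g a} := by
    intro g
    rw [← Set.univ_pi_singleton g, Measure.pi_pi]
  have hdecomp : E' = ⋃ g ∈ (Finset.univ.filter (· ∈ E') : Finset (↑A → Bool)), ({g} : Set (↑A → Bool)) := by
    ext g
    simp
  have step2 : (Measure.pi fun _ : ↑A => bern p) E'
      = ∑ g ∈ (Finset.univ.filter (· ∈ E') : Finset (↑A → Bool)),
          ∏ a : ↑A, bern p {g a} := by
    conv_lhs => rw [hdecomp]
    rw [measure_biUnion_finset ?_ (fun g _ => (Set.to_countable _).measurableSet)]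
    · exact Finset.sum_congr rfl fun g _ => hsing g
    · intro g _ g' hg' hgg'
      exact Set.disjoint_singleton.2 hgg'
  rw [step2, Finset.sum_filter]
  unfold prF
  refine (Finset.sum_bij' (fun s _ => (fun a : ↑A => decide ((a : V) ∈ s)))
    (fun g _ => (A.attach.filter (fun a => g a = true)).image Subtype.val)
    ?_ ?_ ?_ ?_ ?_).symm
  · intro s _
    exact Finset.mem_univ _
  · intro g _
    refine Finset.mem_powerset.2 ?_
    intro z hz
    obtain ⟨a, _, rfl⟩ := Finset.mem_image.1 hz
    exact a.2
  · intro s hs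
    have hsA := Finset.mem_powerset.1 hs
    ext z
    simp only [Finset.mem_image, Finset.mem_filter, Finset.mem_attach, true_and,
      decide_eq_true_eq]
    constructor
    · rintro ⟨a, ha, rfl⟩
      exact ha
    · intro hz
      exact ⟨⟨z, hsA hz⟩, hz, rfl⟩
  · intro g _
    funext a
    simp only [Finset.mem_image, Finset.mem_filter, Finset.mem_attach, true_and]
    by_cases hga : g a = true
    · simp only [hga]
      rw [decide_eq_true_iff]
      exact ⟨a, hga, rfl⟩
    · have hgf : g a = false := by
        revert hga; cases g a <;> simp
      rw [hgf, decide_eq_false_iff_not]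
      rintro ⟨a', ha', hval⟩
      have : a' = a := Subtype.ext hval
      exact hga (this ▸ ha')
  · intro s hs
    have hsA := Finset.mem_powerset.1 hs
    have hind : ((fun a : ↑A => decide ((a : V) ∈ s)) ∈ E')
        ↔ (∃ T ∈ F, T ⊆ s) := by
      simp only [hE', Set.mem_setOf_eq, decide_eq_true_eq]
      constructor
      · rintro ⟨T, hT, h⟩
        exact ⟨T, hT, fun z hz => h ⟨z, hFA T hT hz⟩ hz⟩
      · rintro ⟨T, hT, h⟩
        exact ⟨T, hT, fun a haT => h haT⟩
    have hprod : (∏ a : ↑A, bern p {decide ((a : V) ∈ s)})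
        = prW p A s := by
      rw [Finset.univ_eq_attach]
      have : ∀ a : ↑A, bern p {decide ((a : V) ∈ s)}
          = (if (a : V) ∈ s then p else 1 - p) := by
        intro a
        by_cases h : (a : V) ∈ s <;> simp [h, bern_true, bern_false]
      rw [Finset.prod_congr rfl (fun a _ => this a), Finset.prod_attach A
        (fun v => if v ∈ s then p else 1 - p), Finset.prod_ite, Finset.prod_const,
        Finset.prod_const]
      unfold prW
      congr 2
      · congr 1
        rw [Finset.filter_mem_eq_inter, Finset.inter_eq_right.2 hsA]
      · congr 1
        rw [Finset.sdiff_eq_filter]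
  -- summand equality
    by_cases hcond : ∃ T ∈ F, T ⊆ s
    · rw [if_pos (hind.2 hcond), if_pos hcond, hprod, mul_one]
    · rw [if_neg (fun h => hcond (hind.1 h)), if_neg hcond, mul_zero]

section Graphs

variable {V : Type*} [DecidableEq V] (G : SimpleGraph V) [∀ v, Fintype (G.neighborSet v)]

/-- ball of radius k for walks ending at v -/
def gball (v : V) : ℕ → Finset V
  | 0 => {v}
  | k+1 => gball v k ∪ (gball v k).biUnion fun u => G.neighborFinset u

lemma gball_mono (v : V) (k : ℕ) : gball G v k ⊆ gball G v (k+1) := by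
  rw [gball]
  exact Finset.subset_union_left

lemma support_mem_gball (v : V) :
    ∀ (k : ℕ) {u : V} (P : G.Walk u v), P.length ≤ k → ∀ z ∈ P.support, z ∈ gball G v k := by
  intro k
  induction k with
  | zero =>
    intro u P hP z hz
    cases P with
    | nil =>
      simp only [SimpleGraph.Walk.support_nil, List.mem_singleton] at hz
      subst hz
      simp [gball]
    | cons h q => simp at hP
  | succ k ihk =>
    intro u P hP z hz
    cases P with
    | nil => exact gball_mono G v k (ihk SimpleGraph.Walk.nil (by simp) z hz)
    | @cons _ u' _ h q =>
      rw [SimpleGraph.Walk.support_cons] at hz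
      rcases List.mem_cons.1 hz with rfl | hz'
      · have hu' : u' ∈ gball G v k :=
          ihk q (by simpa using Nat.succ_le_succ_iff.1 hP) u' q.start_mem_support
        rw [gball]
        refine Finset.mem_union_right _ (Finset.mem_biUnion.2 ⟨u', hu', ?_⟩)
        exact (SimpleGraph.mem_neighborFinset G u' z).2 h.symm
      · exact gball_mono G v k (ihk q (by simpa using Nat.succ_le_succ_iff.1 hP) z hz')

lemma support_mem_gball' (o : V) (k : ℕ) {w : V} (P : G.Walk o w) (hP : P.length ≤ k) :
    ∀ z ∈ P.support, z ∈ gball G o k := by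
  intro z hz
  have hz' : z ∈ P.reverse.support := by
    rw [SimpleGraph.Walk.support_reverse]
    exact List.mem_reverse.2 hz
  exact support_mem_gball G o k P.reverse (by rwa [SimpleGraph.Walk.length_reverse]) z hz'

end Graphs

section Lift

variable {VL VS : Type*}

lemma lift_walk (Λ : SimpleGraph VL) (S : SimpleGraph VS) (π : VL → VS)
    (hπ : IsFibration Λ S π) :
    ∀ {u w : VS} (P : S.Walk u w) (y : VL), π y = u →
      ∃ (z : VL) (Q : Λ.Walk y z), Q.support.map π = P.support := by
  intro u w P
  induction P with
  | nil =>
    intro y hy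
    exact ⟨y, SimpleGraph.Walk.nil, by simp [hy]⟩
  | @cons u₁ v₁ w₁ h P ih =>
    intro y hy
    obtain ⟨y₂, hadj, hy₂⟩ := hπ.2 y v₁ (by rw [hy]; exact h)
    obtain ⟨z, Q, hQ⟩ := ih y₂ hy₂
    exact ⟨z, SimpleGraph.Walk.cons hadj Q,
      by rw [SimpleGraph.Walk.support_cons, SimpleGraph.Walk.support_cons, List.map_cons, hQ, hy]⟩

end Lift

end BSaux

/-- **Finite version of the Benjamini–Schramm comparison:** under `p`-site percolation,
the probability of an open self-avoiding path of length `n` from `x` in `Λ` is at least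
the probability of an open self-avoiding path of length `n` from `o` in `S`. -/
theorem stmt16 {VL VS : Type*} [Countable VL] [Countable VS] [Nonempty VS]
    (Λ : SimpleGraph VL) (S : SimpleGraph VS)
    [∀ v, Fintype (Λ.neighborSet v)] [∀ v, Fintype (S.neighborSet v)]
    (π : VL → VS) (hπ : IsFibration Λ S π)
    (o : VS) (x : VL) (hx : π x = o) (n : ℕ) (hn : 1 ≤ n)
    (p : ENNReal) (hp : p ≤ 1)
    (PL : Measure (VL → Bool)) (PS : Measure (VS → Bool))
    (hPL : iidMarginals p PL) (hPS : iidMarginals p PS) :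
    PS {ω | OpenSAP S ω o n} ≤ PL {ω | OpenSAP Λ ω x n} := by
  classical
  letI : DecidableEq VS := Classical.decEq VS
  letI : DecidableEq VL := Classical.decEq VL
  set A : Finset VS := gball S o n with hA
  set B : Finset VL := gball Λ x n with hB
  set PSet : Set (Finset VS × Finset VL) :=
    {q | ∃ (w : VS) (P : S.Walk o w) (w' : VL) (Q : Λ.Walk x w'),
      P.IsPath ∧ P.length = n ∧ Q.IsPath ∧ Q.length = n ∧
      Q.support.map π = P.support ∧
      q.1 = P.support.toFinset ∧ q.2 = Q.support.toFinset} with hPSet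
  have hsubs : ∀ q ∈ PSet, q.1 ⊆ A ∧ q.2 ⊆ B := by
    rintro q ⟨w, P, w', Q, hP1, hPl, hQ1, hQl, hmap, he1, he2⟩
    constructor
    · intro z hz
      rw [he1] at hz
      exact support_mem_gball' S o n P (le_of_eq hPl) z (List.mem_toFinset.1 hz)
    · intro z hz
      rw [he2] at hz
      exact support_mem_gball' Λ x n Q (le_of_eq hQl) z (List.mem_toFinset.1 hz)
  have hfin : PSet.Finite := by
    refine Set.Finite.subset (Finset.finite_toSet (A.powerset ×ˢ B.powerset)) ?_
    intro q hq
    rw [Finset.mem_coe, Finset.mem_product, Finset.mem_powerset, Finset.mem_powerset]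
    exact hsubs q hq
  set Pfam : Finset (Finset VS × Finset VL) := hfin.toFinset with hPfamdef
  have hPfam : ∀ q, q ∈ Pfam ↔ q ∈ PSet := fun q => hfin.mem_toFinset
  have hcond : ∀ q ∈ Pfam, q.1 ⊆ A ∧ q.2 ⊆ B ∧ q.2.image π = q.1 ∧ Set.InjOn π ↑q.2 := by
    intro q hq
    have hq' := (hPfam q).1 hq
    obtain ⟨w, P, w', Q, hP1, hPl, hQ1, hQl, hmap, he1, he2⟩ := hq'
    refine ⟨(hsubs q ((hPfam q).1 hq)).1, (hsubs q ((hPfam q).1 hq)).2, ?_, ?_⟩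
    · rw [he1, he2]
      have : Q.support.toFinset.image π = (Q.support.map π).toFinset := by
        ext z
        simp only [Finset.mem_image, List.mem_toFinset, List.mem_map]
      rw [this, hmap]
    · rw [he2]
      intro y hy y' hy' heq
      have hy1 : y ∈ Q.support := by
        rw [List.coe_toFinset] at hy; exact hy
      have hy2 : y' ∈ Q.support := by
        rw [List.coe_toFinset] at hy'; exact hy'
      have hnodup : (Q.support.map π).Nodup := by
        rw [hmap]; exact (SimpleGraph.Walk.isPath_def P).1 hP1
      exact List.inj_on_of_nodup_map hnodup hy1 hy2 heq
  have hev1 : {ω : VS → Bool | OpenSAP S ω o n}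
      = {ω | ∃ T ∈ Pfam.image Prod.fst, ∀ a ∈ T, ω a = true} := by
    ext ω
    simp only [Set.mem_setOf_eq]
    constructor
    · rintro ⟨w, P, hP1, hPl, hopen⟩
      obtain ⟨z, Q, hmap⟩ := lift_walk Λ S π hπ P x hx
      have hQnodup : Q.support.Nodup := by
        refine List.Nodup.of_map π ?_
        rw [hmap]
        exact (SimpleGraph.Walk.isPath_def P).1 hP1
      have hQpath : Q.IsPath := (SimpleGraph.Walk.isPath_def Q).2 hQnodup
      have hQlen : Q.length = n := by
        have h1 := congrArg List.length hmap
        rw [List.length_map, SimpleGraph.Walk.length_support,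
          SimpleGraph.Walk.length_support] at h1
        omega
      have hqmem : (P.support.toFinset, Q.support.toFinset) ∈ Pfam := by
        rw [hPfam]
        exact ⟨w, P, z, Q, hP1, hPl, hQpath, hQlen, hmap, rfl, rfl⟩
      refine ⟨P.support.toFinset, Finset.mem_image.2 ⟨_, hqmem, rfl⟩, ?_⟩
      intro a ha
      exact hopen a (List.mem_toFinset.1 ha)
    · rintro ⟨T, hT, hop⟩
      obtain ⟨q, hq, rfl⟩ := Finset.mem_image.1 hT
      obtain ⟨w, P, w', Q, hP1, hPl, hQ1, hQl, hmap, he1, he2⟩ := (hPfam q).1 hq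
      refine ⟨w, P, hP1, hPl, ?_⟩
      intro u hu
      refine hop u ?_
      rw [he1]
      exact List.mem_toFinset.2 hu
  have hev2 : {ω : VL → Bool | ∃ T ∈ Pfam.image Prod.snd, ∀ b ∈ T, ω b = true}
      ⊆ {ω | OpenSAP Λ ω x n} := by
    rintro ω ⟨T, hT, hop⟩
    obtain ⟨q, hq, rfl⟩ := Finset.mem_image.1 hT
    obtain ⟨w, P, w', Q, hP1, hPl, hQ1, hQl, hmap, he1, he2⟩ := (hPfam q).1 hq
    refine ⟨w', Q, hQ1, hQl, ?_⟩
    intro u hu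
    refine hop u ?_
    rw [he2]
    exact List.mem_toFinset.2 hu
  have hTA : ∀ T ∈ Pfam.image Prod.fst, T ⊆ A := by
    intro T hT
    obtain ⟨q, hq, rfl⟩ := Finset.mem_image.1 hT
    exact (hcond q hq).1
  have hTB : ∀ T ∈ Pfam.image Prod.snd, T ⊆ B := by
    intro T hT
    obtain ⟨q, hq, rfl⟩ := Finset.mem_image.1 hT
    exact (hcond q hq).2.1
  calc PS {ω | OpenSAP S ω o n}
      = PS {ω | ∃ T ∈ Pfam.image Prod.fst, ∀ a ∈ T, ω a = true} := by rw [hev1]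
    _ = prF p A (Pfam.image Prod.fst) := prob_eq p hp PS hPS A _ hTA
    _ ≤ prF p B (Pfam.image Prod.snd) := prF_main π p hp A B Pfam hcond
    _ = PL {ω | ∃ T ∈ Pfam.image Prod.snd, ∀ b ∈ T, ω b = true} :=
        (prob_eq p hp PL hPL B _ hTB).symm
    _ ≤ PL {ω | OpenSAP Λ ω x n} := measure_mono hev2
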